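/- arXiv:2411.19755 — 8 statements merged into one kernel-verified Lean document; each statement's English description precedes it below -/
import Mathlib

section
/- For all real numbers x and y with |y| < π, the modulus of 1/(1 + e^{x+iy}) is at most 1/((1 + e^x) cos(y/2)). -/
open Complex Real

theorem stmt_0 (x y : ℝ) (hy : |y| < Real.pi) :
    ‖(1 / (1 + Complex.exp (x + y * Complex.I)))‖ ≤
      1 / ((1 + Real.exp x) * Real.cos (y / 2)) := by
  have hy' := abs_lt.mp hy
  have hc : 0 < Real.cos (y / 2) := by
    apply Real.cos_pos_of_mem_Ioo
    constructor <;> [linarith [hy'.1]; linarith [hy'.2]]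
  have hM : 0 < (1 + Real.exp x) * Real.cos (y / 2) := by
    positivity
  have hz : ((1 : ℝ) + Real.exp x) * Real.cos (y / 2) ≤
      ‖(1 + Complex.exp (x + y * Complex.I))‖ := by
    rw [Complex.norm_def, Complex.normSq_apply]
    rw [show ((1 : ℂ) + Complex.exp (x + y * Complex.I)).re = 1 + Real.exp x * Real.cos y by
      simp [Complex.exp_re]]
    rw [show ((1 : ℂ) + Complex.exp (x + y * Complex.I)).im = Real.exp x * Real.sin y by
      simp [Complex.exp_im]]
    rw [Real.le_sqrt hM.le]
    have h1 := Real.sin_sq_add_cos_sq y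
    have h2 : Real.cos (y / 2) ^ 2 = 1 / 2 + Real.cos y / 2 := by
      have := Real.cos_sq (y / 2)
      rwa [show 2 * (y / 2) = y by ring] at this
    have h3 := Real.neg_one_le_cos y
    nlinarith [Real.exp_pos x,
      mul_nonneg (sub_nonneg.2 (Real.cos_le_one y)) (sq_nonneg (1 - Real.exp x))]
    nlinarith [mul_self_nonneg (1 + Real.exp x * Real.cos y),
      mul_self_nonneg (Real.exp x * Real.sin y)]
  rw [norm_div, norm_one]
  exact one_div_le_one_div_of_le hM hz
end

section
/- For all real numbers x and y with |y| < π, the modulus of 1/(1 + e^{-(x+iy)}) is at most 1/((1 + e^{-x}) cos(y/2)). -/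
open Complex Real

theorem stmt_1 (x y : ℝ) (hy : |y| < Real.pi) :
    ‖(1 / (1 + Complex.exp (-(x + y * Complex.I))))‖ ≤
      1 / ((1 + Real.exp (-x)) * Real.cos (y / 2)) := by
  obtain ⟨hy1, hy2⟩ := abs_lt.mp hy
  have hr : 0 < Real.exp (-x) := Real.exp_pos _
  set r := Real.exp (-x) with hrdef
  have hc : 0 < Real.cos (y / 2) := by
    apply Real.cos_pos_of_mem_Ioo
    constructor <;> [linarith; linarith]
  have hb : 0 < (1 + r) * Real.cos (y / 2) := by positivity
  have hre : (1 + Complex.exp (-(x + y * Complex.I))).re = 1 + r * Real.cos y := by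
    simp [Complex.exp_re, Complex.add_re, Complex.neg_re, Complex.neg_im,
      Complex.add_im, Complex.mul_im, Complex.mul_re, Real.cos_neg]
    exact Or.inl rfl
  have him : (1 + Complex.exp (-(x + y * Complex.I))).im = -(r * Real.sin y) := by
    simp [Complex.exp_im, Complex.add_im, Complex.neg_im, Complex.add_re,
      Complex.mul_im, Complex.mul_re, Real.sin_neg]
    exact Or.inl rfl
  have key : (1 + r) * Real.cos (y / 2) ≤
      ‖1 + Complex.exp (-(x + y * Complex.I))‖ := by
    rw [Complex.norm_def, Complex.normSq_apply, hre, him]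
    rw [show (1 + r * Real.cos y) * (1 + r * Real.cos y) +
        -(r * Real.sin y) * -(r * Real.sin y) =
        (1 + r * Real.cos y) ^ 2 + (r * Real.sin y) ^ 2 by ring]
    apply Real.le_sqrt' hb |>.mpr
    have h1 : Real.sin y ^ 2 + Real.cos y ^ 2 = 1 := Real.sin_sq_add_cos_sq y
    have h2 : Real.cos (y / 2) ^ 2 = 1 / 2 + Real.cos y / 2 := by
      have := Real.cos_sq (y / 2)
      rwa [show 2 * (y / 2) = y by ring] at this
    have h3 : Real.cos y ≤ 1 := Real.cos_le_one y
    nlinarith [sq_nonneg (1 - r), sq_nonneg (r * Real.sin y)]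
  rw [norm_div, norm_one]
  exact one_div_le_one_div_of_le hb key
end

section
/- For all real numbers x and y with |y| < π, the modulus of log(1 + e^{-(x+iy)}) is at most log(1 + e^{-x}) / cos(y/2). -/
open Complex Real Filter

-- key modulus lower bound: |1 + e^{t+iy}| ≥ (1+e^t) cos(y/2)
lemma aux_abs_lb (t y : ℝ) :
    (1 + Real.exp t) * Real.cos (y/2) ≤ ‖1 + Complex.exp (t + y * Complex.I)‖ := by
  have hre : (1 + Complex.exp (t + y * Complex.I)).re = 1 + Real.exp t * Real.cos y := by
    simp [Complex.exp_re]
  have him : (1 + Complex.exp (t + y * Complex.I)).im = Real.exp t * Real.sin y := by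
    simp [Complex.exp_im]
  have hsq : (‖1 + Complex.exp (t + y * Complex.I)‖)^2
      = (1 + Real.exp t * Real.cos y)^2 + (Real.exp t * Real.sin y)^2 := by
    rw [Complex.sq_norm, Complex.normSq_apply, hre, him, sq, sq]
  have h1 : Real.cos (y/2)^2 = 1/2 + Real.cos y / 2 := by
    have := Real.cos_sq (y/2)
    rw [show 2 * (y/2) = y by ring] at this
    linarith
  have h2 : Real.sin y ^2 + Real.cos y ^2 = 1 := Real.sin_sq_add_cos_sq y
  have habs := norm_nonneg (1 + Complex.exp (t + y * Complex.I))
  nlinarith [sq_nonneg ((1 - Real.exp t)), Real.exp_pos t, sq_nonneg (Real.sin y),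
    sq_nonneg ((1 + Real.exp t) * Real.cos (y/2) - ‖1 + Complex.exp (t + y * Complex.I)‖),
    sq_nonneg (1 - Real.cos y)]

lemma aux_cos_pos {y : ℝ} (hy : |y| < Real.pi) : 0 < Real.cos (y/2) := by
  have h := abs_lt.mp hy
  apply Real.cos_pos_of_mem_Ioo
  constructor <;> [linarith [h.1]; linarith [h.2]]

lemma aux_ne_zero {y : ℝ} (hy : |y| < Real.pi) (t : ℝ) :
    1 + Complex.exp (t + y * Complex.I) ≠ 0 := by
  intro h
  have := aux_abs_lb t y
  rw [h] at this
  simp at this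
  nlinarith [aux_cos_pos hy, Real.exp_pos t]

lemma aux_mem_slitPlane {y : ℝ} (hy : |y| < Real.pi) (t : ℝ) :
    1 + Complex.exp (t + y * Complex.I) ∈ Complex.slitPlane := by
  rw [Complex.mem_slitPlane_iff]
  have him : (1 + Complex.exp (t + y * Complex.I)).im = Real.exp t * Real.sin y := by
    simp [Complex.exp_im]
  by_cases hs : Real.sin y = 0
  · have h := abs_lt.mp hy
    have hy0 : y = 0 := (Real.sin_eq_zero_iff_of_lt_of_lt h.1 h.2).mp hs
    left
    subst hy0
    have hre : (1 + Complex.exp (t + (0:ℝ) * Complex.I)).re = 1 + Real.exp t := by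
      simp [Complex.exp_re]
    rw [hre]
    positivity
  · right
    rw [him]
    exact mul_ne_zero (Real.exp_pos t).ne' hs

/-- derivative of F(t) = log(1 + e^{-(t+iy)}) -/
lemma aux_hasDerivAt {y : ℝ} (hy : |y| < Real.pi) (t : ℝ) :
    HasDerivAt (fun s : ℝ => Complex.log (1 + Complex.exp (-(s + y * Complex.I))))
      (-(1 + Complex.exp (t + y * Complex.I))⁻¹) t := by
  have hyneg : |(-y)| < Real.pi := by rwa [abs_neg]
  have key : -((t:ℂ) + (y:ℂ) * Complex.I) = ((-t : ℝ) : ℂ) + ((-y : ℝ) : ℂ) * Complex.I := by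
    push_cast; ring
  have hinner : HasDerivAt (fun z : ℂ => 1 + Complex.exp (-(z + y * Complex.I)))
      (-Complex.exp (-((t:ℂ) + y * Complex.I))) (t : ℂ) := by
    have h1 : HasDerivAt (fun z : ℂ => -(z + (y:ℂ) * Complex.I)) (-1) (t : ℂ) := by
      exact ((hasDerivAt_id ((t:ℂ))).add_const ((y:ℂ) * Complex.I)).neg
    have h2 := (Complex.hasDerivAt_exp (-((t:ℂ) + y * Complex.I))).comp (t:ℂ) h1
    simpa [mul_comm] using (h2.const_add 1)
  have hslit : 1 + Complex.exp (-((t:ℂ) + y * Complex.I)) ∈ Complex.slitPlane := by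
    rw [key]; exact aux_mem_slitPlane hyneg (-t)
  have hlog := (Complex.hasDerivAt_log hslit).comp (t:ℂ) hinner
  have hcomp := hlog.comp_ofReal
  convert hcomp using 1
  · rfl
  set E : ℂ := Complex.exp ((t:ℂ) + y * Complex.I) with hE
  have hez : E ≠ 0 := Complex.exp_ne_zero _
  have hne2 : 1 + E ≠ 0 := aux_ne_zero hy t
  have hexp : Complex.exp (-((t:ℂ) + y * Complex.I)) = E⁻¹ := Complex.exp_neg _
  rw [hexp]
  have key2 : (1 + E⁻¹) * E = 1 + E := by field_simp; ring
  calc -(1 + E)⁻¹ = -((1 + E⁻¹) * E)⁻¹ := by rw [key2]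
    _ = (1 + E⁻¹)⁻¹ * -E⁻¹ := by rw [mul_inv]; ring

/-- derivative of the real comparison function -/
lemma aux_hasDerivAt_real (t : ℝ) :
    HasDerivAt (fun s : ℝ => -Real.log (1 + Real.exp (-s)))
      (Real.exp (-t) / (1 + Real.exp (-t))) t := by
  have h1 : HasDerivAt (fun s : ℝ => 1 + Real.exp (-s)) (-Real.exp (-t)) t := by
    have := (Real.hasDerivAt_exp (-t)).comp t ((hasDerivAt_id t).neg)
    simpa [mul_comm] using this.const_add 1
  have hne : 1 + Real.exp (-t) ≠ 0 := by positivity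
  have := (h1.log hne).neg
  refine this.congr_deriv ?_
  ring

theorem stmt_2 (x y : ℝ) (hy : |y| < Real.pi) :
    ‖Complex.log (1 + Complex.exp (-(x + y * Complex.I)))‖ ≤
      Real.log (1 + Real.exp (-x)) / Real.cos (y / 2) := by
  have hc := aux_cos_pos hy
  set F : ℝ → ℂ := fun s => Complex.log (1 + Complex.exp (-(s + y * Complex.I))) with hF
  set L : ℝ := Real.log (1 + Real.exp (-x)) / Real.cos (y/2) with hL
  -- bound on the derivative
  have hbound : ∀ t : ℝ, ‖-(1 + Complex.exp (t + y * Complex.I))⁻¹‖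
      ≤ (Real.exp (-t) / (1 + Real.exp (-t))) / Real.cos (y/2) := by
    intro t
    rw [norm_neg, norm_inv]
    have hlb := aux_abs_lb t y
    have hpos : 0 < (1 + Real.exp t) * Real.cos (y/2) := by positivity
    have h1 : ‖1 + Complex.exp (↑t + ↑y * Complex.I)‖⁻¹
        ≤ ((1 + Real.exp t) * Real.cos (y/2))⁻¹ := by
      exact inv_anti₀ hpos hlb
    refine h1.trans (le_of_eq ?_)
    rw [Real.exp_neg]
    have hpt : (0:ℝ) < Real.exp t := Real.exp_pos t
    rw [eq_div_iff hc.ne', inv_eq_one_div]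
    field_simp
    ring
  -- for each b ≥ x, FTC bound
  have hstep : ∀ b : ℝ, x ≤ b → ‖F x‖ ≤ ‖F b‖ + L := by
    intro b hb
    have hderiv : ∀ t ∈ Set.uIcc x b,
        HasDerivAt F (-(1 + Complex.exp (t + y * Complex.I))⁻¹) t :=
      fun t _ => aux_hasDerivAt hy t
    have hcont : Continuous fun t : ℝ => -(1 + Complex.exp (t + y * Complex.I))⁻¹ := by
      apply Continuous.neg
      apply Continuous.inv₀
      · continuity
      · exact fun t => aux_ne_zero hy t
    have hint : IntervalIntegrable (fun t : ℝ => -(1 + Complex.exp (t + y * Complex.I))⁻¹)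
        MeasureTheory.volume x b := hcont.intervalIntegrable x b
    have hftc := intervalIntegral.integral_eq_sub_of_hasDerivAt hderiv hint
    -- real integral
    have hderivR : ∀ t ∈ Set.uIcc x b,
        HasDerivAt (fun s : ℝ => -Real.log (1 + Real.exp (-s)))
          (Real.exp (-t) / (1 + Real.exp (-t))) t := fun t _ => aux_hasDerivAt_real t
    have hcontR : Continuous fun t : ℝ => Real.exp (-t) / (1 + Real.exp (-t)) := by
      apply Continuous.div
      · continuity
      · continuity
      · intro t; positivity
    have hintR : IntervalIntegrable (fun t : ℝ => Real.exp (-t) / (1 + Real.exp (-t)))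
        MeasureTheory.volume x b := hcontR.intervalIntegrable x b
    have hftcR := intervalIntegral.integral_eq_sub_of_hasDerivAt hderivR hintR
    -- norm of the complex integral ≤ real integral / cos
    have hnn : ∀ t : ℝ, 0 ≤ Real.exp (-t) / (1 + Real.exp (-t)) * (Real.cos (y/2))⁻¹ := by
      intro t; positivity
    have hnorm : ‖∫ t in x..b, -(1 + Complex.exp (t + y * Complex.I))⁻¹‖
        ≤ (∫ t in x..b, Real.exp (-t) / (1 + Real.exp (-t))) / Real.cos (y/2) := by
      rw [div_eq_mul_inv, ← intervalIntegral.integral_mul_const]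
      refine le_trans (intervalIntegral.norm_integral_le_abs_of_norm_le ?_ (hintR.mul_const _))
        (le_of_eq (abs_of_nonneg ?_))
      · filter_upwards with t
        have := hbound t
        rwa [div_eq_mul_inv (_ / _)] at this
      · exact intervalIntegral.integral_nonneg hb (fun t _ => hnn t)
    have hval : (∫ t in x..b, Real.exp (-t) / (1 + Real.exp (-t)))
        = Real.log (1 + Real.exp (-x)) - Real.log (1 + Real.exp (-b)) := by
      rw [hftcR]; ring
    have hlogb_pos : 0 ≤ Real.log (1 + Real.exp (-b)) := by
      apply Real.log_nonneg
      nlinarith [Real.exp_pos (-b)]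
    have hle : (∫ t in x..b, Real.exp (-t) / (1 + Real.exp (-t))) / Real.cos (y/2) ≤ L := by
      rw [hval, hL]
      gcongr
      linarith
    have hFx : F x = F b - ∫ t in x..b, -(1 + Complex.exp (t + y * Complex.I))⁻¹ := by
      rw [hftc]; ring
    calc ‖F x‖ = ‖F b - ∫ t in x..b, -(1 + Complex.exp (t + y * Complex.I))⁻¹‖ := by
          rw [hFx]
      _ ≤ ‖F b‖ + ‖∫ t in x..b, -(1 + Complex.exp (t + y * Complex.I))⁻¹‖ := norm_sub_le _ _
      _ ≤ ‖F b‖ + L := by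
          refine add_le_add (le_of_eq rfl) (hnorm.trans hle)
  -- take b → ∞
  have htend1 : Tendsto (fun b : ℝ => Complex.exp (-(b + y * Complex.I))) atTop (nhds 0) := by
    rw [tendsto_zero_iff_norm_tendsto_zero]
    have : (fun b : ℝ => ‖Complex.exp (-(b + y * Complex.I))‖) = fun b : ℝ => Real.exp (-b) := by
      funext b
      rw [Complex.norm_exp]
      congr 1
      simp
    rw [this]
    exact Real.tendsto_exp_atBot.comp tendsto_neg_atTop_atBot
  have htend2 : Tendsto (fun b : ℝ => 1 + Complex.exp (-(b + y * Complex.I))) atTop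
      (nhds 1) := by
    simpa using htend1.const_add 1
  have htend3 : Tendsto F atTop (nhds 0) := by
    have hcont1 : ContinuousAt Complex.log 1 :=
      continuousAt_clog Complex.one_mem_slitPlane
    have := hcont1.tendsto.comp htend2
    rwa [Complex.log_one] at this
  have htend4 : Tendsto (fun b => ‖F b‖ + L) atTop (nhds (0 + L)) := by
    have : Tendsto (fun b => ‖F b‖) atTop (nhds 0) := by
      have := htend3.norm
      simpa using this
    exact this.add_const L
  rw [zero_add] at htend4
  exact ge_of_tendsto htend4 (by filter_upwards [eventually_ge_atTop x] with b hb using hstep b hb)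
end

section
/- For all real numbers x and y with |y| < π/2, the modulus of 1/(1 + e^{π sinh(x+iy)}) is at most 1/((1 + e^{π sinh(x) cos y}) cos((π/2) sin y)). -/
open Complex Real

set_option maxHeartbeats 1000000 in
lemma key_ineq (X Y : ℝ) (hX : 0 ≤ X) (hY : 0 ≤ Y) (hY2 : Y ≤ Real.pi / 2) :
    |Real.sin (Real.pi / 2 * Real.sin Y * Real.cosh X)| ≤
      Real.cosh (Real.pi / 2 * Real.sinh X * Real.cos Y) * Real.sin (Real.pi / 2 * Real.sin Y) := by
  have hπ : 0 < Real.pi := Real.pi_pos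
  set c := Real.pi / 2 * Real.sin Y with hc
  set s := Real.pi / 2 * Real.sinh X * Real.cos Y with hs
  have hsY0 : 0 ≤ Real.sin Y := Real.sin_nonneg_of_nonneg_of_le_pi hY (by linarith)
  have hsY1 : Real.sin Y ≤ 1 := Real.sin_le_one Y
  have hc0 : 0 ≤ c := by rw [hc]; positivity
  have hc2 : c ≤ Real.pi / 2 := by rw [hc]; nlinarith
  have hsc0 : 0 ≤ Real.sin c := Real.sin_nonneg_of_nonneg_of_le_pi hc0 (by linarith)
  have hcc0 : 0 ≤ Real.cos c := Real.cos_nonneg_of_mem_Icc ⟨by linarith, hc2⟩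
  have hcY0 : 0 ≤ Real.cos Y := Real.cos_nonneg_of_mem_Icc ⟨by linarith, hY2⟩
  have hYc : Real.sin Y ≤ Real.sin c := by
    have h1 := Real.mul_le_sin hc0 hc2
    have h2 : 2 / Real.pi * c = Real.sin Y := by
      rw [hc]; field_simp
    linarith
  have hK1 : Real.cos c ≤ Real.pi / 2 * Real.cos Y ^ 2 := by
    have h1 : Real.cos c = Real.sin (Real.pi / 2 - c) := (Real.sin_pi_div_two_sub c).symm
    have h2 : Real.sin (Real.pi / 2 - c) ≤ Real.pi / 2 - c := by
      have h3 := Real.abs_sin_le_abs (x := Real.pi / 2 - c)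
      rw [_root_.abs_of_nonneg (by linarith : (0:ℝ) ≤ Real.pi / 2 - c)] at h3
      exact le_trans (le_abs_self _) h3
    have h4 := Real.sin_sq_add_cos_sq Y
    nlinarith
  have hcoshX : Real.cosh X = 1 + 2 * Real.sinh (X / 2) ^ 2 := by
    have h1 : Real.cosh X = Real.cosh (2 * (X / 2)) := by rw [show 2 * (X / 2) = X by ring]
    have h2 := Real.cosh_sq_sub_sinh_sq (X / 2)
    rw [h1, Real.cosh_two_mul]; nlinarith
  have hsinhX : Real.sinh X = 2 * Real.sinh (X / 2) * Real.cosh (X / 2) := by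
    have h1 : Real.sinh X = Real.sinh (2 * (X / 2)) := by rw [show 2 * (X / 2) = X by ring]
    rw [h1, Real.sinh_two_mul]
  have hh0 : 0 ≤ Real.sinh (X / 2) ^ 2 := sq_nonneg _
  have ht1 : (1:ℝ) ≤ Real.cosh X := Real.one_le_cosh X
  have hq0 : 0 ≤ c * (Real.cosh X - 1) := mul_nonneg hc0 (by linarith)
  have step1 : |Real.sin (c * Real.cosh X)| ≤
      Real.sin c + Real.cos c * (c * (Real.cosh X - 1)) := by
    have hsplit : c * Real.cosh X = c + c * (Real.cosh X - 1) := by ring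
    rw [hsplit, Real.sin_add]
    refine le_trans (abs_add_le _ _) ?_
    have e1 : |Real.sin c * Real.cos (c * (Real.cosh X - 1))| ≤ Real.sin c := by
      rw [_root_.abs_mul, _root_.abs_of_nonneg hsc0]
      exact mul_le_of_le_one_right hsc0 (Real.abs_cos_le_one _)
    have e2 : |Real.cos c * Real.sin (c * (Real.cosh X - 1))| ≤
        Real.cos c * (c * (Real.cosh X - 1)) := by
      rw [_root_.abs_mul, _root_.abs_of_nonneg hcc0]
      refine mul_le_mul_of_nonneg_left ?_ hcc0
      refine le_trans Real.abs_sin_le_abs ?_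
      rw [_root_.abs_of_nonneg hq0]
    linarith
  have hshX : 0 ≤ Real.sinh X := Real.sinh_nonneg_iff.2 hX
  have hs0 : 0 ≤ s := by rw [hs]; positivity
  have hcoshs : 1 + s ^ 2 / 2 ≤ Real.cosh s := by
    have h1 : Real.cosh s = Real.cosh (2 * (s / 2)) := by rw [show 2 * (s / 2) = s by ring]
    have h2 := Real.cosh_sq_sub_sinh_sq (s / 2)
    have h3 : s / 2 ≤ Real.sinh (s / 2) := Real.self_le_sinh_iff.2 (by linarith)
    rw [h1, Real.cosh_two_mul]
    nlinarith
  have hss : Real.pi ^ 2 / 2 * Real.sinh (X / 2) ^ 2 * Real.cos Y ^ 2 ≤ s ^ 2 / 2 := by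
    have h1 : s ^ 2 = Real.pi ^ 2 / 4 * (Real.sinh X) ^ 2 * Real.cos Y ^ 2 := by
      rw [hs]; ring
    have h2 : (Real.sinh X) ^ 2 = 4 * Real.sinh (X / 2) ^ 2 * Real.cosh (X / 2) ^ 2 := by
      rw [hsinhX]; ring
    have h3 : (1:ℝ) ≤ Real.cosh (X / 2) ^ 2 := by
      nlinarith [Real.one_le_cosh (X / 2)]
    rw [h1, h2]
    nlinarith [mul_nonneg (mul_nonneg (sq_nonneg (Real.sinh (X / 2))) (sq_nonneg (Real.cos Y)))
      (sub_nonneg.2 h3), Real.pi_pos]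
  have step2 : Real.cos c * (c * (Real.cosh X - 1)) ≤ Real.sin c * (Real.cosh s - 1) := by
    have hq : c * (Real.cosh X - 1) = Real.pi * Real.sin Y * Real.sinh (X / 2) ^ 2 := by
      rw [hcoshX, hc]; ring
    rw [hq]
    have t1 : Real.cos c * (Real.pi * Real.sin Y * Real.sinh (X / 2) ^ 2) ≤
        (Real.pi / 2 * Real.cos Y ^ 2) * (Real.pi * Real.sin Y * Real.sinh (X / 2) ^ 2) := by
      refine mul_le_mul_of_nonneg_right hK1 (by positivity)
    have t2 : (Real.pi / 2 * Real.cos Y ^ 2) * (Real.pi * Real.sin Y * Real.sinh (X / 2) ^ 2) ≤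
        (Real.pi / 2 * Real.cos Y ^ 2) * (Real.pi * Real.sin c * Real.sinh (X / 2) ^ 2) := by
      refine mul_le_mul_of_nonneg_left ?_ (by positivity)
      nlinarith [mul_le_mul_of_nonneg_right hYc (mul_nonneg hπ.le hh0)]
    have t3 : (Real.pi / 2 * Real.cos Y ^ 2) * (Real.pi * Real.sin c * Real.sinh (X / 2) ^ 2) =
        Real.sin c * (Real.pi ^ 2 / 2 * Real.sinh (X / 2) ^ 2 * Real.cos Y ^ 2) := by ring
    have t4 : Real.sin c * (Real.pi ^ 2 / 2 * Real.sinh (X / 2) ^ 2 * Real.cos Y ^ 2) ≤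
        Real.sin c * (Real.cosh s - 1) := by
      refine mul_le_mul_of_nonneg_left ?_ hsc0
      linarith
    linarith
  have hfin : |Real.sin (c * Real.cosh X)| ≤ Real.sin c * Real.cosh s := by
    have hr : Real.sin c * Real.cosh s = Real.sin c + Real.sin c * (Real.cosh s - 1) := by ring
    linarith
  rw [mul_comm (Real.cosh s) (Real.sin c)]
  exact hfin

set_option maxHeartbeats 1000000 in
lemma key2 (x y : ℝ) (hy : |y| ≤ Real.pi / 2) :
    Real.sin (Real.pi * Real.cosh x * Real.sin y / 2) ^ 2 ≤
      Real.cosh (Real.pi * Real.sinh x * Real.cos y / 2) ^ 2 *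
        Real.sin (Real.pi / 2 * Real.sin y) ^ 2 := by
  have hπ : 0 < Real.pi := Real.pi_pos
  have hy2 := abs_le.1 hy
  have h0 := key_ineq |x| |y| (_root_.abs_nonneg x) (_root_.abs_nonneg y) hy
  have hchx : Real.cosh |x| = Real.cosh x := Real.cosh_abs x
  have hcy : Real.cos |y| = Real.cos y := Real.cos_abs y
  have hcy0 : 0 ≤ Real.cos y := Real.cos_nonneg_of_mem_Icc ⟨hy2.1, hy2.2⟩
  have hsy : Real.sin |y| = |Real.sin y| := by
    rcases abs_cases y with ⟨h1, h2⟩ | ⟨h1, h2⟩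
    · rw [h1, _root_.abs_of_nonneg (Real.sin_nonneg_of_nonneg_of_le_pi h2 (by linarith))]
    · rw [h1, Real.sin_neg]
      have : 0 ≤ Real.sin (-y) :=
        Real.sin_nonneg_of_nonneg_of_le_pi (by linarith) (by linarith)
      rw [Real.sin_neg] at this
      rw [_root_.abs_of_nonpos (by linarith)]
  have hshx : Real.sinh |x| = |Real.sinh x| := by
    rcases abs_cases x with ⟨h1, h2⟩ | ⟨h1, h2⟩
    · rw [h1, _root_.abs_of_nonneg (Real.sinh_nonneg_iff.2 h2)]
    · have hx0 : Real.sinh x ≤ 0 := by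
        have := Real.sinh_le_sinh (x := x) (y := 0) |>.2 (le_of_lt (by linarith) : x ≤ 0)
        simpa using this
      rw [h1, Real.sinh_neg, _root_.abs_of_nonpos hx0]
  rw [hchx, hcy, hsy, hshx] at h0
  have hsq : ∀ u : ℝ, Real.sin |u| ^ 2 = Real.sin u ^ 2 := by
    intro u
    rcases abs_cases u with ⟨h1, _⟩ | ⟨h1, _⟩ <;> rw [h1] <;> simp [Real.sin_neg]
  have e1 : Real.pi / 2 * |Real.sin y| * Real.cosh x = |Real.pi * Real.cosh x * Real.sin y / 2| := by
    rw [_root_.abs_div, _root_.abs_mul, _root_.abs_mul, _root_.abs_of_nonneg hπ.le,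
      _root_.abs_of_nonneg (Real.cosh_pos x).le, _root_.abs_of_nonneg (by norm_num : (0:ℝ) ≤ 2)]
    ring
  have e2 : Real.pi / 2 * |Real.sinh x| * Real.cos y = |Real.pi * Real.sinh x * Real.cos y / 2| := by
    rw [_root_.abs_div, _root_.abs_mul, _root_.abs_mul, _root_.abs_of_nonneg hπ.le, _root_.abs_of_nonneg hcy0,
      _root_.abs_of_nonneg (by norm_num : (0:ℝ) ≤ 2)]
    ring
  have e3 : Real.pi / 2 * |Real.sin y| = |Real.pi / 2 * Real.sin y| := by
    rw [_root_.abs_mul, _root_.abs_of_nonneg (by positivity : (0:ℝ) ≤ Real.pi / 2)]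
  rw [e1, e2, e3] at h0
  have h1 := pow_le_pow_left₀ (_root_.abs_nonneg _) h0 2
  rw [_root_.sq_abs, mul_pow] at h1
  calc Real.sin (Real.pi * Real.cosh x * Real.sin y / 2) ^ 2
      = Real.sin |Real.pi * Real.cosh x * Real.sin y / 2| ^ 2 := (hsq _).symm
    _ ≤ Real.cosh |Real.pi * Real.sinh x * Real.cos y / 2| ^ 2 *
          Real.sin |Real.pi / 2 * Real.sin y| ^ 2 := h1
    _ = Real.cosh (Real.pi * Real.sinh x * Real.cos y / 2) ^ 2 *
          Real.sin (Real.pi / 2 * Real.sin y) ^ 2 := by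
        rw [Real.cosh_abs, hsq]

set_option maxHeartbeats 1000000 in
theorem stmt_5 (x y : ℝ) (hy : |y| < Real.pi / 2) :
    ‖(1 / (1 + Complex.exp (Real.pi * Complex.sinh (x + y * Complex.I))))‖ ≤
      1 / ((1 + Real.exp (Real.pi * Real.sinh x * Real.cos y)) *
        Real.cos (Real.pi / 2 * Real.sin y)) := by
  have hπ : 0 < Real.pi := Real.pi_pos
  have hy2 := abs_lt.1 hy
  set a := Real.pi * Real.sinh x * Real.cos y with ha
  set b := Real.pi * Real.cosh x * Real.sin y with hb
  set c := Real.pi / 2 * Real.sin y with hc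
  have hcy : 0 < Real.cos y := Real.cos_pos_of_mem_Ioo ⟨hy2.1, hy2.2⟩
  have hsy1 : -1 < Real.sin y ∧ Real.sin y < 1 := by
    have h1 := Real.sin_sq_add_cos_sq y
    constructor <;> nlinarith
  have hcc : 0 < Real.cos c := by
    apply Real.cos_pos_of_mem_Ioo
    constructor
    · rw [hc]
      nlinarith [mul_pos (by positivity : (0:ℝ) < Real.pi / 2)
        (by linarith [hsy1.1] : (0:ℝ) < Real.sin y + 1)]
    · rw [hc]
      nlinarith [mul_pos (by positivity : (0:ℝ) < Real.pi / 2)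
        (by linarith [hsy1.2] : (0:ℝ) < 1 - Real.sin y)]
  have hw : (↑Real.pi * Complex.sinh (↑x + ↑y * Complex.I)) =
      Complex.ofReal a + Complex.ofReal b * Complex.I := by
    rw [Complex.sinh_add, Complex.sinh_mul_I, Complex.cosh_mul_I,
      ← Complex.ofReal_sinh, ← Complex.ofReal_cosh, ← Complex.ofReal_sin, ← Complex.ofReal_cos]
    push_cast [ha, hb]
    ring
  rw [hw, norm_div, norm_one]
  have hre : (1 + Complex.exp (Complex.ofReal a + Complex.ofReal b * Complex.I)).re =
      1 + Real.exp a * Real.cos b := by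
    simp [Complex.exp_re]
  have him : (1 + Complex.exp (Complex.ofReal a + Complex.ofReal b * Complex.I)).im =
      Real.exp a * Real.sin b := by
    simp [Complex.exp_im]
  have habs : ‖(1 + Complex.exp (Complex.ofReal a + Complex.ofReal b * Complex.I))‖ =
      Real.sqrt ((1 + Real.exp a * Real.cos b) ^ 2 + (Real.exp a * Real.sin b) ^ 2) := by
    rw [Complex.norm_def, Complex.normSq_apply, hre, him]
    ring_nf
  have hkey := key2 x y hy.le
  have hEa : Real.exp a = Real.exp (a / 2) ^ 2 := by
    rw [sq, ← Real.exp_add]; norm_num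
  have hE1 : Real.exp (a / 2) * Real.exp (-(a / 2)) = 1 := by
    rw [← Real.exp_add]; simp
  have hch : Real.cosh (a / 2) = (Real.exp (a / 2) + Real.exp (-(a / 2))) / 2 := Real.cosh_eq _
  have hcb : Real.cos b = 1 - 2 * Real.sin (b / 2) ^ 2 := by
    have h1 : Real.cos b = Real.cos (2 * (b / 2)) := by rw [show 2 * (b / 2) = b by ring]
    have h2 := Real.sin_sq_add_cos_sq (b / 2)
    rw [h1, Real.cos_two_mul']; nlinarith
  have hsb : Real.sin b = 2 * Real.sin (b / 2) * Real.cos (b / 2) := by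
    have h1 : Real.sin b = Real.sin (2 * (b / 2)) := by rw [show 2 * (b / 2) = b by ring]
    rw [h1, Real.sin_two_mul]
  have hkeya : Real.sin (b / 2) ^ 2 ≤ Real.cosh (a / 2) ^ 2 * Real.sin c ^ 2 := by
    rw [ha, hb, hc]
    exact hkey
  have h4 : 4 * Real.exp a * Real.sin (b / 2) ^ 2 ≤ (1 + Real.exp a) ^ 2 * Real.sin c ^ 2 := by
    have h5 : (1 + Real.exp a) ^ 2 = 4 * Real.exp a * Real.cosh (a / 2) ^ 2 := by
      rw [hch, hEa]
      have hE := hE1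
      nlinarith [Real.exp_pos (a / 2), Real.exp_pos (-(a / 2))]
    rw [h5]
    have h6 : 4 * Real.exp a * Real.sin (b / 2) ^ 2 ≤
        4 * Real.exp a * (Real.cosh (a / 2) ^ 2 * Real.sin c ^ 2) := by
      refine mul_le_mul_of_nonneg_left hkeya (by positivity)
    linarith [h6, le_of_eq (by ring :
      4 * Real.exp a * (Real.cosh (a / 2) ^ 2 * Real.sin c ^ 2) =
        4 * Real.exp a * Real.cosh (a / 2) ^ 2 * Real.sin c ^ 2)]
  have hlow : (1 + Real.exp a) * Real.cos c ≤
      ‖(1 + Complex.exp (Complex.ofReal a + Complex.ofReal b * Complex.I))‖ := by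
    rw [habs]
    rw [Real.le_sqrt (by positivity) (by positivity)]
    have hpy := Real.sin_sq_add_cos_sq (b / 2)
    have hpyc := Real.sin_sq_add_cos_sq c
    rw [hcb, hsb]
    have hx1 : 4 * Real.exp a ^ 2 * Real.sin (b / 2) ^ 2 *
        (Real.sin (b / 2) ^ 2 + Real.cos (b / 2) ^ 2) =
        4 * Real.exp a ^ 2 * Real.sin (b / 2) ^ 2 := by rw [hpy]; ring
    have hx2 : Real.cos c ^ 2 = 1 - Real.sin c ^ 2 := by linarith
    nlinarith [h4, hx1, hx2, Real.exp_pos a]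
  have hpos : 0 < (1 + Real.exp a) * Real.cos c := by positivity
  exact one_div_le_one_div_of_le hpos hlow
end

section
/- For all real numbers x and y with |y| < π/2, the modulus of log(1 + e^{-π sinh(x+iy)}) is at most log(1 + e^{-π sinh(x) cos y}) / (cos((π/2) sin y) · cos y). -/
open Complex Real Set MeasureTheory Filter intervalIntegral

-- Becker-Stark type inequality
lemma myBS (σ : ℝ) (h0 : 0 ≤ σ) (h1 : σ ≤ 1) :
    σ * Real.cos (Real.pi/2 * σ) ≤ Real.sin (Real.pi/2 * σ) * (Real.pi/2 * (1 - σ^2)) := by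
  have hs : σ ≤ Real.sin (Real.pi/2 * σ) := by
    have := Real.mul_le_sin (x := Real.pi/2 * σ) (by positivity)
      (by nlinarith [Real.pi_pos])
    have hπ : Real.pi ≠ 0 := Real.pi_ne_zero
    calc σ = 2 / Real.pi * (Real.pi / 2 * σ) := by field_simp
    _ ≤ _ := this
  have hc : Real.cos (Real.pi/2 * σ) ≤ Real.pi/2 * (1 - σ) := by
    have : Real.cos (Real.pi/2 * σ) = Real.sin (Real.pi/2 - Real.pi/2*σ) := by
      rw [Real.sin_pi_div_two_sub]
    rw [this]
    have := Real.sin_le (x := Real.pi/2 - Real.pi/2*σ) (by nlinarith [Real.pi_pos])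
    linarith [this]
  have hcnn : 0 ≤ Real.cos (Real.pi/2 * σ) := by
    apply Real.cos_nonneg_of_mem_Icc
    constructor <;> nlinarith [Real.pi_pos]
  nlinarith [mul_le_mul_of_nonneg_right hs (show (0:ℝ) ≤ Real.pi/2*(1-σ)*(1+σ) by nlinarith [Real.pi_pos]), mul_le_mul_of_nonneg_left hc h0, Real.pi_pos]

lemma myCosh (a : ℝ) : 1 + a^2/2 ≤ Real.cosh a := by
  have h2 : Real.cosh a = 2 * Real.sinh (a/2)^2 + 1 := by
    have := Real.cosh_two_mul (a/2)
    have h3 := Real.cosh_sq (a/2)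
    rw [show 2*(a/2) = a by ring] at this
    nlinarith
  rcases le_or_gt 0 a with h | h
  · have : a/2 ≤ Real.sinh (a/2) := Real.self_le_sinh_iff.mpr (by linarith)
    nlinarith
  · have : Real.sinh (a/2) ≤ a/2 := Real.sinh_le_self_iff.mpr (by linarith)
    nlinarith

lemma myK (σ τ t : ℝ) (h0 : 0 ≤ σ) (h1 : σ ≤ 1) (hτ0 : 0 ≤ τ) (hστ : σ^2 + τ^2 = 1) :
    |Real.sin (Real.pi/2 * (σ * Real.cosh t))| ≤
      Real.sin (Real.pi/2 * σ) * Real.cosh (Real.pi/2 * (τ * Real.sinh t)) := by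
  have hπ := Real.pi_pos
  set A := Real.pi/2 with hA
  have hApos : 0 < A := by positivity
  set r := Real.cosh t with hrdef
  have hr : 1 ≤ r := Real.one_le_cosh t
  have hs2 : Real.sinh t ^ 2 = r^2 - 1 := by
    have := Real.cosh_sq t; nlinarith
  have hsinnn : 0 ≤ Real.sin (A * σ) := by
    apply Real.sin_nonneg_of_nonneg_of_le_pi (by positivity)
    nlinarith
  have hcosnn : 0 ≤ Real.cos (A * σ) := by
    apply Real.cos_nonneg_of_mem_Icc
    constructor <;> nlinarith
  have hδ : 0 ≤ A * σ * (r - 1) := mul_nonneg (mul_nonneg hApos.le h0) (by linarith)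
  have hsplit : |Real.sin (A * (σ * r))| ≤ Real.sin (A*σ) + Real.cos (A*σ) * (A*σ*(r-1)) := by
    have : A * (σ * r) = A*σ + A*σ*(r-1) := by ring
    rw [this, Real.sin_add]
    calc |Real.sin (A*σ) * Real.cos (A*σ*(r-1)) + Real.cos (A*σ) * Real.sin (A*σ*(r-1))|
        ≤ |Real.sin (A*σ) * Real.cos (A*σ*(r-1))| + |Real.cos (A*σ) * Real.sin (A*σ*(r-1))| :=
          abs_add_le _ _
      _ ≤ Real.sin (A*σ) + Real.cos (A*σ) * (A*σ*(r-1)) := by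
          rw [abs_mul, abs_mul, _root_.abs_of_nonneg hsinnn, _root_.abs_of_nonneg hcosnn]
          have h1 : |Real.cos (A*σ*(r-1))| ≤ 1 := Real.abs_cos_le_one _
          have h2 : |Real.sin (A*σ*(r-1))| ≤ A*σ*(r-1) := by
            have := Real.abs_sin_le_abs (x := A*σ*(r-1))
            rwa [_root_.abs_of_nonneg hδ] at this
          have := mul_le_mul_of_nonneg_left h1 hsinnn
          have := mul_le_mul_of_nonneg_left h2 hcosnn
          nlinarith
  refine hsplit.trans ?_
  -- now: sin(Aσ) + cos(Aσ)·Aσ(r−1) ≤ sin(Aσ)·cosh(Aτs)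
  have hch := myCosh (A * (τ * Real.sinh t))
  have hBS := myBS σ h0 h1
  rw [← hA] at hBS
  -- hBS : σ * cos (A σ) ≤ sin (A σ) * (A * (1 - σ^2))
  have hτ2 : 1 - σ^2 = τ^2 := by linarith
  rw [hτ2] at hBS
  have key : Real.cos (A*σ) * (A*σ*(r-1)) ≤ Real.sin (A*σ) * (Real.cosh (A*(τ*Real.sinh t)) - 1) := by
    have h1 : Real.cos (A*σ) * (A*σ*(r-1)) ≤ Real.sin (A*σ) * (A*τ^2) * (A * (r-1)) := by
      have := mul_le_mul_of_nonneg_right hBS (show 0 ≤ A*(r-1) by nlinarith)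
      nlinarith
    have h2 : Real.sin (A*σ) * (A*τ^2) * (A*(r-1)) ≤
        Real.sin (A*σ) * ((A*(τ*Real.sinh t))^2/2) := by
      have hx : (A*(τ*Real.sinh t))^2/2 = A^2*τ^2*(r^2-1)/2 := by
        rw [mul_pow, mul_pow]; rw [hs2]; ring
      rw [hx]
      have : A*τ^2*(A*(r-1)) ≤ A^2*τ^2*(r^2-1)/2 := by nlinarith
      have := mul_le_mul_of_nonneg_left this hsinnn
      linarith [this]
    have h3 : Real.sin (A*σ) * ((A*(τ*Real.sinh t))^2/2) ≤
        Real.sin (A*σ) * (Real.cosh (A*(τ*Real.sinh t)) - 1) := by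
      apply mul_le_mul_of_nonneg_left _ hsinnn
      linarith
    linarith
  nlinarith

lemma myAbsLB (y t : ℝ) (hσ : |Real.sin y| < 1) (hτpos : 0 < Real.cos y) :
    Real.cos (Real.pi/2 * Real.sin y) * (1 + Real.exp (Real.pi * (Real.sinh t * Real.cos y))) ≤
      ‖1 + Complex.exp ((Real.pi : ℂ) * Complex.sinh (t + y * Complex.I))‖ := by
  have hπ := Real.pi_pos
  have hz : (Real.pi : ℂ) * Complex.sinh (t + y*Complex.I) =
      ((Real.pi * (Real.sinh t * Real.cos y) : ℝ):ℂ) +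
        ((Real.pi * (Real.cosh t * Real.sin y) : ℝ):ℂ)*Complex.I := by
    rw [Complex.sinh_add, Complex.sinh_mul_I, Complex.cosh_mul_I, ← Complex.ofReal_sinh,
      ← Complex.ofReal_cosh, ← Complex.ofReal_sin, ← Complex.ofReal_cos]
    push_cast
    ring
  set U := Real.pi * (Real.sinh t * Real.cos y) with hU
  set V := Real.pi * (Real.cosh t * Real.sin y) with hV
  rw [hz]
  have h1 : (1 : ℂ) + Complex.exp ((U:ℂ) + (V:ℂ)*Complex.I) =
      ((1 + Real.exp U * Real.cos V : ℝ) : ℂ) + ((Real.exp U * Real.sin V : ℝ) : ℂ) * Complex.I := by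
    rw [Complex.exp_add, Complex.exp_mul_I, ← Complex.ofReal_exp, ← Complex.ofReal_cos,
      ← Complex.ofReal_sin]
    push_cast
    ring
  rw [h1, Complex.norm_add_mul_I]
  have hcpos : 0 < Real.cos (Real.pi/2 * Real.sin y) := by
    apply Real.cos_pos_of_mem_Ioo
    constructor
    · rcases abs_lt.mp hσ with ⟨ha, hb⟩; nlinarith
    · rcases abs_lt.mp hσ with ⟨ha, hb⟩; nlinarith
  have hEpos := Real.exp_pos U
  rw [Real.le_sqrt (by positivity) (by positivity)]
  -- algebraic part
  set S := Real.sin (Real.pi/2 * Real.sin y) with hS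
  set E := Real.exp U with hE
  have hc2 : Real.cos (Real.pi/2 * Real.sin y)^2 = 1 - S^2 := by
    linear_combination Real.sin_sq_add_cos_sq (Real.pi/2 * Real.sin y)
  have hq : Real.exp (U/2) * Real.exp (U/2) = E := by
    rw [← Real.exp_add]; norm_num; rfl
  have h4 : (1+E)^2 = 4*E*Real.cosh (U/2)^2 := by
    have hcosh : 1 + E = 2*Real.exp (U/2)*Real.cosh (U/2) := by
      rw [Real.cosh_eq, Real.exp_neg]
      field_simp
      rw [← hq]; ring
    calc (1+E)^2 = (2*Real.exp (U/2)*Real.cosh (U/2))^2 := by rw [hcosh]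
    _ = 4*(Real.exp (U/2)*Real.exp (U/2))*Real.cosh (U/2)^2 := by ring
    _ = 4*E*Real.cosh (U/2)^2 := by rw [hq]
  have h5 : 2*E*(1 - Real.cos V) = 4*E*Real.sin (V/2)^2 := by
    have : Real.sin (V/2)^2 = 1/2 - Real.cos V/2 := by
      have hcs := Real.cos_sq (V/2)
      have hsc := Real.sin_sq_add_cos_sq (V/2)
      rw [show 2*(V/2) = V by ring] at hcs
      linarith
    rw [this]; ring
  -- key inequality via myK
  have hK := myK |Real.sin y| (Real.cos y) t (abs_nonneg _) hσ.le hτpos.le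
    (by rw [_root_.sq_abs]; exact Real.sin_sq_add_cos_sq y)
  have e3 : U/2 = Real.pi/2*(Real.cos y * Real.sinh t) := by rw [hU]; ring
  have hkey : Real.sin (V/2)^2 ≤ S^2 * Real.cosh (U/2)^2 := by
    have e1 : Real.sin (V/2)^2 = Real.sin (Real.pi/2*(|Real.sin y| * Real.cosh t))^2 := by
      rcases abs_cases (Real.sin y) with ⟨h,_⟩|⟨h,_⟩
      · rw [h]; congr 2; rw [hV]; ring
      · rw [h]
        have : Real.pi/2*(-Real.sin y*Real.cosh t) = -(V/2) := by rw [hV]; ring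
        rw [this, Real.sin_neg]; ring
    have e2 : S^2 = Real.sin (Real.pi/2*|Real.sin y|)^2 := by
      rcases abs_cases (Real.sin y) with ⟨h,_⟩|⟨h,_⟩
      · rw [h]
      · rw [h]
        have : Real.pi/2*(-Real.sin y) = -(Real.pi/2*Real.sin y) := by ring
        rw [this, Real.sin_neg]; ring
    rw [e1, e2, e3]
    have h6 : (0:ℝ) ≤ Real.sin (Real.pi/2*|Real.sin y|) * Real.cosh (Real.pi/2*(Real.cos y * Real.sinh t)) := by
      have : 0 ≤ Real.sin (Real.pi/2*|Real.sin y|) := by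
        apply Real.sin_nonneg_of_nonneg_of_le_pi (by positivity)
        nlinarith [abs_nonneg (Real.sin y), hσ.le]
      positivity
    calc Real.sin (Real.pi/2*(|Real.sin y| * Real.cosh t))^2
        = |Real.sin (Real.pi/2*(|Real.sin y| * Real.cosh t))|^2 := (_root_.sq_abs _).symm
      _ ≤ (Real.sin (Real.pi/2*|Real.sin y|) * Real.cosh (Real.pi/2*(Real.cos y * Real.sinh t)))^2 := by
          exact pow_le_pow_left₀ (abs_nonneg _) hK 2
      _ = Real.sin (Real.pi/2*|Real.sin y|)^2 * Real.cosh (Real.pi/2*(Real.cos y * Real.sinh t))^2 := by ring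
  -- finish
  have h6 : 4*E*Real.sin (V/2)^2 ≤ 4*E*(S^2*Real.cosh (U/2)^2) := by
    apply mul_le_mul_of_nonneg_left hkey (by positivity)
  have hRHS : (1 + E*Real.cos V)^2 + (E*Real.sin V)^2 = 1 + 2*E*Real.cos V + E^2 := by
    linear_combination (E^2) * Real.sin_sq_add_cos_sq V
  calc (Real.cos (Real.pi/2 * Real.sin y) * (1+E))^2
      = (1-S^2)*(1+E)^2 := by rw [mul_pow, hc2]
    _ = (1+E)^2 - S^2*(4*E*Real.cosh (U/2)^2) := by linear_combination (-(S^2))*h4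
    _ ≤ (1+E)^2 - 4*E*Real.sin (V/2)^2 := by linarith
    _ = (1+E)^2 - 2*E*(1-Real.cos V) := by linarith
    _ = 1 + 2*E*Real.cos V + E^2 := by ring
    _ = (1 + E*Real.cos V)^2 + (E*Real.sin V)^2 := hRHS.symm

lemma mySqIm (a : ℝ) (n : ℤ) (hπl : -Real.pi ≤ a) (hπu : a ≤ Real.pi) :
    a^2 ≤ (a + n*(2*Real.pi))^2 := by
  have hπ := Real.pi_pos
  rcases lt_trichotomy n 0 with h|h|h
  · have hn1 : (n:ℝ) ≤ -1 := by exact_mod_cast (by omega : n ≤ -1)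
    have h1 : Real.pi * ((n:ℝ) + 1) ≤ 0 := mul_nonpos_of_nonneg_of_nonpos hπ.le (by linarith)
    nlinarith [mul_nonneg (by linarith : (0:ℝ) ≤ -(n:ℝ)) (by linarith : (0:ℝ) ≤ -(a + Real.pi*(n:ℝ)))]
  · simp [h]
  · have hn1 : (1:ℝ) ≤ (n:ℝ) := by exact_mod_cast (by omega : 1 ≤ n)
    have h1 : 0 ≤ Real.pi * ((n:ℝ) - 1) := mul_nonneg hπ.le (by linarith)
    nlinarith [mul_nonneg (by linarith : (0:ℝ) ≤ (n:ℝ)) (by linarith : (0:ℝ) ≤ a + Real.pi*(n:ℝ))]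

lemma myLogLe (z wc : ℂ) (hz : z ≠ 0) (hexp : Complex.exp wc = z) :
    ‖Complex.log z‖ ≤ ‖wc‖ := by
  have hexp2 : Complex.exp wc = Complex.exp (Complex.log z) := by rw [Complex.exp_log hz, hexp]
  obtain ⟨n, hn⟩ := Complex.exp_eq_exp_iff_exists_int.mp hexp2
  have hre : wc.re = (Complex.log z).re := by rw [hn]; simp
  have him : wc.im = (Complex.log z).im + n*(2*Real.pi) := by
    rw [hn]; simp; try ring
  have harg : |(Complex.log z).im| ≤ Real.pi := by
    rw [Complex.log_im]
    exact abs_le.mpr ⟨(Complex.neg_pi_lt_arg _).le, Complex.arg_le_pi _⟩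
  obtain ⟨hargl, hargu⟩ := abs_le.mp harg
  have him2 : (Complex.log z).im^2 ≤ wc.im^2 := by
    rw [him]; exact mySqIm _ n (by linarith) (by linarith)
  have hsq : ‖Complex.log z‖^2 ≤ ‖wc‖^2 := by
    rw [Complex.sq_norm, Complex.sq_norm, Complex.normSq_apply, Complex.normSq_apply, ← hre]
    rw [pow_two, pow_two] at him2
    linarith [him2]
  exact (pow_le_pow_iff_left₀ (norm_nonneg _) (norm_nonneg _) two_ne_zero).mp hsq
section MainPart
open Complex Real Set MeasureTheory Filter Topology intervalIntegral

theorem stmt_6 (x y : ℝ) (hy : |y| < Real.pi / 2) :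
    ‖Complex.log (1 + Complex.exp (-(Real.pi * Complex.sinh (x + y * Complex.I))))‖ ≤
      Real.log (1 + Real.exp (-(Real.pi * Real.sinh x * Real.cos y))) /
        (Real.cos (Real.pi / 2 * Real.sin y) * Real.cos y) := by
  have hπ := Real.pi_pos
  obtain ⟨hy1, hy2⟩ := abs_lt.mp hy
  have hτpos : 0 < Real.cos y := Real.cos_pos_of_mem_Ioo ⟨hy1, hy2⟩
  have hσ : |Real.sin y| < 1 := by
    have habs : |Real.sin y| = Real.sin |y| := by
      rcases abs_cases y with ⟨h1,h2⟩|⟨h1,h2⟩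
      · rw [h1, _root_.abs_of_nonneg (Real.sin_nonneg_of_nonneg_of_le_pi h2 (by linarith))]
      · rw [h1, Real.sin_neg,
          _root_.abs_of_nonpos (Real.sin_nonpos_of_nonpos_of_neg_pi_le h2.le (by linarith))]
    rw [habs]
    have h2 : Real.sin |y| < Real.sin (Real.pi/2) := by
      apply Real.strictMonoOn_sin ⟨by linarith [abs_nonneg y], hy.le⟩
        ⟨by linarith, le_refl _⟩ hy
    rwa [Real.sin_pi_div_two] at h2
  have hcpos : 0 < Real.cos (Real.pi/2 * Real.sin y) := by
    apply Real.cos_pos_of_mem_Ioo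
    obtain ⟨ha, hb⟩ := abs_lt.mp hσ
    constructor
    · nlinarith
    · nlinarith
  set τ := Real.cos y with hτdef
  set c := Real.cos (Real.pi/2 * Real.sin y) with hcdef
  -- the integrand
  set g : ℝ → ℂ := fun t => (Real.pi : ℂ) * Complex.cosh (t + y*Complex.I) /
      (1 + Complex.exp ((Real.pi:ℂ) * Complex.sinh (t + y*Complex.I))) with hgdef
  have hden : ∀ t:ℝ, (1 + Complex.exp ((Real.pi:ℂ) * Complex.sinh (t + y*Complex.I))) ≠ 0 := by
    intro t h0
    have h := myAbsLB y t hσ hτpos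
    rw [h0] at h
    simp only [norm_zero] at h
    nlinarith [Real.exp_pos (Real.pi*(Real.sinh t * Real.cos y))]
  have hζcont : Continuous (fun t:ℝ => (t:ℂ) + y*Complex.I) :=
    Complex.continuous_ofReal.add continuous_const
  have hgc : Continuous g := by
    apply Continuous.div
    · exact continuous_const.mul (Complex.continuous_cosh.comp hζcont)
    · exact continuous_const.add (Complex.continuous_exp.comp
        (continuous_const.mul (Complex.continuous_sinh.comp hζcont)))
    · exact hden
  -- norm bound for g
  have hcoshUB : ∀ t:ℝ, ‖Complex.cosh (t + y*Complex.I)‖ ≤ Real.cosh t := by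
    intro t
    have h1 : Complex.cosh ((t:ℂ) + y*Complex.I) =
        ((Real.cosh t * Real.cos y : ℝ):ℂ) + ((Real.sinh t * Real.sin y : ℝ):ℂ)*Complex.I := by
      rw [Complex.cosh_add, Complex.sinh_mul_I, Complex.cosh_mul_I, ← Complex.ofReal_sinh,
        ← Complex.ofReal_cosh, ← Complex.ofReal_sin, ← Complex.ofReal_cos]
      push_cast
      ring
    rw [h1, Complex.norm_add_mul_I]
    have h2 : Real.sin y ^ 2 + Real.cos y ^2 = 1 := Real.sin_sq_add_cos_sq y
    have h3 : Real.sinh t ^2 ≤ Real.cosh t ^2 := by nlinarith [Real.cosh_sq t]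
    have hle : (Real.cosh t * Real.cos y)^2 + (Real.sinh t * Real.sin y)^2 ≤ (Real.cosh t)^2 := by
      nlinarith [sq_nonneg (Real.sin y), sq_nonneg (Real.cos y)]
    calc Real.sqrt ((Real.cosh t * Real.cos y)^2 + (Real.sinh t * Real.sin y)^2)
        ≤ Real.sqrt ((Real.cosh t)^2) := Real.sqrt_le_sqrt hle
      _ = Real.cosh t := Real.sqrt_sq (Real.cosh_pos t).le
  set Gr : ℝ → ℝ := fun t => Real.pi * Real.cosh t / (c * (1 + Real.exp (Real.pi*(Real.sinh t * τ)))) with hGrdef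
  have hgnorm : ∀ t:ℝ, ‖g t‖ ≤ Gr t := by
    intro t
    rw [hgdef]
    simp only [norm_div, norm_mul]
    rw [Complex.norm_real, Real.norm_eq_abs, _root_.abs_of_nonneg hπ.le]
    apply div_le_div₀ (by positivity)
    · exact mul_le_mul_of_nonneg_left (hcoshUB t) hπ.le
    · positivity
    · exact (myAbsLB y t hσ hτpos).trans (le_of_eq rfl) |>.trans (le_of_eq rfl)
  -- real antiderivative
  set fr : ℝ → ℝ := fun t => -(Real.log (1 + Real.exp (-(Real.pi * (Real.sinh t * τ)))) / (c*τ)) with hfrdef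
  have hfr' : ∀ t:ℝ, HasDerivAt fr (Gr t) t := by
    intro t
    have h1 : HasDerivAt (fun s:ℝ => -(Real.pi * (Real.sinh s * τ))) (-(Real.pi * (Real.cosh t * τ))) t := by
      exact (((Real.hasDerivAt_sinh t).mul_const τ).const_mul Real.pi).neg
    have h3 := h1.exp
    have h4 := h3.const_add 1
    have h5 := h4.log (by positivity)
    have h6 := (h5.div_const (c*τ)).neg
    refine h6.congr_deriv ?_
    rw [hGrdef]
    simp only
    rw [Real.exp_neg]
    have hE := Real.exp_pos (Real.pi*(Real.sinh t*τ))
    field_simp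
    ring
  have hfrlim : Tendsto fr atTop (𝓝 0) := by
    have hsinh : Tendsto Real.sinh atTop atTop := by
      apply tendsto_atTop_mono' _ _ tendsto_id
      filter_upwards [eventually_ge_atTop (0:ℝ)] with t ht
      exact Real.self_le_sinh_iff.mpr ht
    have h1 : Tendsto (fun t:ℝ => -(Real.pi * (Real.sinh t * τ))) atTop atBot := by
      have : Tendsto (fun t:ℝ => (-(Real.pi * τ)) * Real.sinh t) atTop atBot :=
        Tendsto.const_mul_atTop_of_neg (by nlinarith) hsinh
      convert this using 2
      ring
    have h2 : Tendsto (fun t:ℝ => Real.exp (-(Real.pi * (Real.sinh t * τ)))) atTop (𝓝 0) :=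
      Real.tendsto_exp_atBot.comp h1
    have h3 : Tendsto (fun t:ℝ => 1 + Real.exp (-(Real.pi * (Real.sinh t * τ)))) atTop (𝓝 1) := by
      simpa using (tendsto_const_nhds (x := (1:ℝ))).add h2
    have h4 : Tendsto (fun t:ℝ => Real.log (1 + Real.exp (-(Real.pi * (Real.sinh t * τ))))) atTop (𝓝 0) := by
      have := (Real.continuousAt_log (by norm_num : (1:ℝ) ≠ 0)).tendsto.comp h3
      simpa [Function.comp_def] using this
    have h5 : Tendsto (fun t:ℝ => -Real.log (1 + Real.exp (-(Real.pi * (Real.sinh t * τ)))) / (c*τ))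
        atTop (𝓝 0) := by simpa using (h4.neg.div_const (c*τ))
    exact Tendsto.congr (fun t => by ring) h5
  have hGrnn : ∀ t:ℝ, 0 ≤ Gr t := by
    intro t
    rw [hGrdef]
    have := Real.cosh_pos t
    have := Real.exp_pos (Real.pi*(Real.sinh t * τ))
    positivity
  have hGrint : IntegrableOn Gr (Ioi x) := by
    exact integrableOn_Ioi_deriv_of_nonneg ((hfr' x).continuousAt.continuousWithinAt)
      (fun t _ => hfr' t) (fun t _ => hGrnn t) hfrlim
  have hGrval : ∫ t in Ioi x, Gr t = 0 - fr x :=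
    integral_Ioi_of_hasDerivAt_of_tendsto' (fun t _ => hfr' t) hGrint hfrlim
  -- complex integrability
  have hgint : IntegrableOn g (Ioi x) := by
    apply Integrable.mono' hGrint (hgc.aestronglyMeasurable.restrict)
    exact ae_of_all _ hgnorm
  set w := ∫ t in Ioi x, g t with hwdef
  have hwnorm : ‖w‖ ≤ ∫ t in Ioi x, Gr t :=
    norm_integral_le_of_norm_le hGrint (ae_of_all _ hgnorm)
  -- the ODE argument
  set u : ℝ → ℂ := fun t => 1 + Complex.exp (-((Real.pi:ℂ) * Complex.sinh (t + y*Complex.I))) with hudef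
  have hu' : ∀ t:ℝ, HasDerivAt u
      (-((Real.pi:ℂ) * Complex.cosh (t+y*Complex.I)) *
        Complex.exp (-((Real.pi:ℂ)*Complex.sinh (t+y*Complex.I)))) t := by
    intro t
    have hw1 : ∀ z:ℂ, HasDerivAt (fun z:ℂ => Complex.exp (-((Real.pi:ℂ) * Complex.sinh (z + y*Complex.I))))
        (Complex.exp (-((Real.pi:ℂ) * Complex.sinh (z + y*Complex.I))) *
          (-((Real.pi:ℂ) * Complex.cosh (z + y*Complex.I)))) z := by
      intro z
      have ha : HasDerivAt (fun z:ℂ => z + (y:ℂ)*Complex.I) 1 z := (hasDerivAt_id z).add_const _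
      have hb := (Complex.hasDerivAt_sinh (z + (y:ℂ)*Complex.I)).comp z ha
      have hc := ((hb.const_mul (Real.pi:ℂ)).neg).cexp
      refine hc.congr_deriv ?_
      simp only [Pi.neg_apply, Function.comp_apply]
      ring
    have := HasDerivAt.comp_ofReal (hw1 ((t:ℝ) : ℂ))
    have h2 := this.const_add 1
    refine h2.congr_deriv ?_
    ring
  have hF : ∀ t:ℝ, HasDerivAt (fun r => ∫ s in x..r, g s) (g t) t := by
    intro t
    exact intervalIntegral.integral_hasDerivAt_right (hgc.intervalIntegrable x t)
      (hgc.stronglyMeasurableAtFilter volume (nhds t))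
      hgc.continuousAt
  set ψ : ℝ → ℂ := fun t => u t * Complex.exp (∫ s in x..t, g s) with hψdef
  have hψ' : ∀ t:ℝ, HasDerivAt ψ 0 t := by
    intro t
    have h := (hu' t).mul ((hF t).cexp)
    refine h.congr_deriv ?_
    set Ez := Complex.exp ((Real.pi:ℂ)*Complex.sinh ((t:ℂ) + y*Complex.I)) with hEzdef
    have hEne : Ez ≠ 0 := Complex.exp_ne_zero _
    have hexpneg : Complex.exp (-((Real.pi:ℂ)*Complex.sinh ((t:ℂ) + y*Complex.I))) = Ez⁻¹ := by
      rw [hEzdef, ← Complex.exp_neg]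
    rw [hudef, hgdef]
    simp only
    rw [hexpneg]
    have hd := hden t
    rw [← hEzdef] at hd ⊢
    field_simp
    ring
  have hψconst : ∀ t:ℝ, ψ t = ψ x := by
    intro t
    exact is_const_of_deriv_eq_zero (fun s => (hψ' s).differentiableAt)
      (fun s => (hψ' s).deriv) t x
  have hψx : ψ x = u x := by
    rw [hψdef]
    simp [intervalIntegral.integral_same]
  -- limits
  have hFlim : Tendsto (fun t => ∫ s in x..t, g s) atTop (𝓝 w) :=
    intervalIntegral_tendsto_integral_Ioi x hgint tendsto_id
  have hexpabs : ∀ t:ℝ, ‖Complex.exp (-((Real.pi:ℂ) * Complex.sinh (t + y*Complex.I)))‖ =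
      Real.exp (-(Real.pi * (Real.sinh t * Real.cos y))) := by
    intro t
    have hz : -((Real.pi : ℂ) * Complex.sinh (t + y*Complex.I)) =
        ((-(Real.pi * (Real.sinh t * Real.cos y)) : ℝ):ℂ) +
          ((-(Real.pi * (Real.cosh t * Real.sin y)) : ℝ):ℂ)*Complex.I := by
      rw [Complex.sinh_add, Complex.sinh_mul_I, Complex.cosh_mul_I, ← Complex.ofReal_sinh,
        ← Complex.ofReal_cosh, ← Complex.ofReal_sin, ← Complex.ofReal_cos]
      push_cast
      ring
    rw [Complex.norm_exp, hz]
    simp [Complex.sinh_ofReal_re, Complex.cos_ofReal_re]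
  have hulim : Tendsto u atTop (𝓝 1) := by
    rw [tendsto_iff_norm_sub_tendsto_zero]
    have heq : ∀ t:ℝ, ‖u t - 1‖ = Real.exp (-(Real.pi * (Real.sinh t * Real.cos y))) := by
      intro t
      rw [hudef]
      simp only [add_sub_cancel_left]
      rw [hexpabs t]
    have hsinh : Tendsto Real.sinh atTop atTop := by
      apply tendsto_atTop_mono' _ _ tendsto_id
      filter_upwards [eventually_ge_atTop (0:ℝ)] with t ht
      exact Real.self_le_sinh_iff.mpr ht
    have h1 : Tendsto (fun t:ℝ => -(Real.pi * (Real.sinh t * Real.cos y))) atTop atBot := by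
      have : Tendsto (fun t:ℝ => (-(Real.pi * Real.cos y)) * Real.sinh t) atTop atBot :=
        Tendsto.const_mul_atTop_of_neg (by nlinarith) hsinh
      convert this using 2
      ring
    have h2 := Real.tendsto_exp_atBot.comp h1
    exact Tendsto.congr (fun t => (heq t).symm) h2
  have hψlim : Tendsto ψ atTop (𝓝 (1 * Complex.exp w)) :=
    hulim.mul ((Complex.continuous_exp.tendsto w).comp hFlim)
  have hux : u x = Complex.exp w := by
    have h1 : Tendsto ψ atTop (𝓝 (u x)) := by
      rw [show (𝓝 (u x)) = 𝓝 (ψ x) by rw [hψx]]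
      exact Tendsto.congr (fun t => (hψconst t).symm) tendsto_const_nhds
    have := tendsto_nhds_unique h1 hψlim
    rw [this, one_mul]
  -- final comparison
  have huxne : u x ≠ 0 := by rw [hux]; exact Complex.exp_ne_zero w
  have habs : ‖Complex.log (u x)‖ ≤ ‖w‖ := myLogLe (u x) w huxne hux.symm
  -- assemble
  have hfinal : ‖Complex.log (u x)‖ ≤
      Real.log (1 + Real.exp (-(Real.pi * (Real.sinh x * τ)))) / (c*τ) := by
    calc ‖Complex.log (u x)‖ ≤ ‖w‖ := habs
      _ = ‖w‖ := rfl
      _ ≤ ∫ t in Ioi x, Gr t := hwnorm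
      _ = 0 - fr x := hGrval
      _ = Real.log (1 + Real.exp (-(Real.pi * (Real.sinh x * τ)))) / (c*τ) := by
          rw [hfrdef]
          simp only
          ring
  have hmatch : (1 : ℂ) + Complex.exp (-(Real.pi * Complex.sinh (x + y * Complex.I))) = u x := by
    rw [hudef]
  rw [hmatch]
  refine hfinal.trans (le_of_eq ?_)
  rw [show Real.pi * Real.sinh x * Real.cos y = Real.pi * (Real.sinh x * τ) by rw [hτdef]; ring]

end MainPart
end

section
/- Let α > 0. Then the function G₋(x) = -sinh(x) cosh(x) e^{πα sinh x} is monotonically increasing on (-∞, -arsinh(2/(πα))]. -/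
open Real

theorem stmt_8 (α : ℝ) (hα : 0 < α) :
    MonotoneOn (fun x : ℝ => -Real.sinh x * Real.cosh x * Real.exp (Real.pi * α * Real.sinh x))
      (Set.Iic (-Real.arsinh (2 / (Real.pi * α)))) := by
  set c := Real.pi * α with hc
  have hcpos : 0 < c := mul_pos Real.pi_pos hα
  have hderiv : ∀ x : ℝ, HasDerivAt
      (fun x => -Real.sinh x * Real.cosh x * Real.exp (c * Real.sinh x))
      (-((Real.sinh x)^2 + (1 + c * Real.sinh x) * (Real.cosh x)^2) * Real.exp (c * Real.sinh x)) x := by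
    intro x
    have h1 : HasDerivAt (fun x => -Real.sinh x * Real.cosh x)
        (-(Real.cosh x) * Real.cosh x + -Real.sinh x * Real.sinh x) x :=
      (Real.hasDerivAt_sinh x).neg.mul (Real.hasDerivAt_cosh x)
    have h2 : HasDerivAt (fun x => Real.exp (c * Real.sinh x))
        (Real.exp (c * Real.sinh x) * (c * Real.cosh x)) x :=
      ((Real.hasDerivAt_sinh x).const_mul c).exp
    have h3 := h1.mul h2
    exact h3.congr_deriv (by ring)
  apply monotoneOn_of_deriv_nonneg (convex_Iic _)
  · exact Continuous.continuousOn (by continuity)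
  · intro x hx
    exact (hderiv x).differentiableAt.differentiableWithinAt
  · intro x hx
    rw [(hderiv x).deriv]
    rw [interior_Iic] at hx
    have hs : Real.sinh x ≤ -(2 / c) := by
      have h := Real.sinh_le_sinh.mpr (le_of_lt hx)
      rwa [Real.sinh_neg, Real.sinh_arsinh] at h
    have hcs : c * Real.sinh x ≤ -2 := by
      have := mul_le_mul_of_nonneg_left hs (le_of_lt hcpos)
      calc c * Real.sinh x ≤ c * -(2 / c) := this
        _ = -2 := by field_simp
    have hcosh : 1 ≤ (Real.cosh x)^2 := by
      nlinarith [Real.one_le_cosh x]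
    have hkey : (Real.sinh x)^2 + (1 + c * Real.sinh x) * (Real.cosh x)^2 ≤ -1 := by
      have hpyth : (Real.cosh x)^2 - (Real.sinh x)^2 = 1 := Real.cosh_sq_sub_sinh_sq x
      nlinarith
    have hexp : 0 < Real.exp (c * Real.sinh x) := Real.exp_pos _
    nlinarith
end

section
/- Let β > 0. Then the function G₊(x) = sinh(x) cosh(x) e^{-πβ sinh x} is monotonically decreasing on [arsinh(2/(πβ)), ∞). -/
open Real

theorem stmt_9 (β : ℝ) (hβ : 0 < β) :
    AntitoneOn (fun x : ℝ => Real.sinh x * Real.cosh x * Real.exp (-(Real.pi * β * Real.sinh x)))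
      (Set.Ici (Real.arsinh (2 / (Real.pi * β)))) := by
  set a := Real.pi * β with ha
  have ha0 : 0 < a := mul_pos Real.pi_pos hβ
  have hderiv : ∀ x : ℝ, HasDerivAt
      (fun x : ℝ => Real.sinh x * Real.cosh x * Real.exp (-(a * Real.sinh x)))
      ((Real.cosh x ^ 2 + Real.sinh x ^ 2 - a * Real.sinh x * Real.cosh x ^ 2) *
        Real.exp (-(a * Real.sinh x))) x := by
    intro x
    have h1 : HasDerivAt (fun x : ℝ => Real.sinh x * Real.cosh x)
        (Real.cosh x * Real.cosh x + Real.sinh x * Real.sinh x) x :=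
      (Real.hasDerivAt_sinh x).mul (Real.hasDerivAt_cosh x)
    have h2 : HasDerivAt (fun x : ℝ => Real.exp (-(a * Real.sinh x)))
        (Real.exp (-(a * Real.sinh x)) * (-(a * Real.cosh x))) x := by
      have : HasDerivAt (fun x : ℝ => -(a * Real.sinh x)) (-(a * Real.cosh x)) x :=
        (((Real.hasDerivAt_sinh x).const_mul a).neg)
      exact (Real.hasDerivAt_exp _).comp x this
    have := h1.mul h2
    exact this.congr_deriv (by ring)
  apply antitoneOn_of_deriv_nonpos (convex_Ici _)
  · exact Continuous.continuousOn (by continuity)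
  · intro x hx
    exact (hderiv x).differentiableAt.differentiableWithinAt
  · intro x hx
    rw [interior_Ici] at hx
    rw [(hderiv x).deriv]
    have hs : 2 / a < Real.sinh x := by
      have := Real.sinh_lt_sinh.mpr hx
      rwa [Real.sinh_arsinh] at this
    have hc : 1 ≤ Real.cosh x := Real.one_le_cosh x
    have hsq : Real.sinh x ^ 2 = Real.cosh x ^ 2 - 1 := by
      have := Real.cosh_sq_sub_sinh_sq x; linarith
    have h2 : 2 < a * Real.sinh x := by
      rw [div_lt_iff₀ ha0] at hs; linarith
    have hc2 : 1 ≤ Real.cosh x ^ 2 := by nlinarith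
    have key : Real.cosh x ^ 2 + Real.sinh x ^ 2 - a * Real.sinh x * Real.cosh x ^ 2 ≤ 0 := by
      nlinarith
    exact mul_nonpos_of_nonpos_of_nonneg key (Real.exp_nonneg _)
end

section
/- Let d > 0, μ > 0, α ≥ μ, and let n be a positive integer. Let h = arsinh(2dn/μ)/n and assume h ≤ πd. Then M = ⌈(1/h) arsinh((μ/α) q(2dn/μ))⌉, where q(x) = x/arsinh(x), satisfies Mh ≥ arsinh(2d/(αh)) ≥ arsinh(2/(πα)), and moreover α sinh(Mh) ≥ μ q(2dn/μ). -/
open Real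

theorem stmt_15 (d μ α : ℝ) (hd : 0 < d) (hμ : 0 < μ) (hα : μ ≤ α)
    (n : ℕ) (hn : 0 < n)
    (h : ℝ) (hh : h = Real.arsinh (2 * d * n / μ) / n)
    (hhd : h ≤ Real.pi * d)
    (M : ℕ)
    (hM : M = ⌈(1 / h) * Real.arsinh ((μ / α) *
        ((2 * d * n / μ) / Real.arsinh (2 * d * n / μ)))⌉₊) :
    (M : ℝ) * h ≥ Real.arsinh (2 * d / (α * h)) ∧
    Real.arsinh (2 * d / (α * h)) ≥ Real.arsinh (2 / (Real.pi * α)) ∧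
    α * Real.sinh ((M : ℝ) * h) ≥ μ * ((2 * d * n / μ) / Real.arsinh (2 * d * n / μ)) := by
  have hα0 : 0 < α := lt_of_lt_of_le hμ hα
  have hn0 : (0:ℝ) < n := by exact_mod_cast hn
  have hx : (0:ℝ) < 2 * d * n / μ := by positivity
  have hA : 0 < Real.arsinh (2 * d * n / μ) := Real.arsinh_pos_iff.mpr hx
  have hh0 : 0 < h := by rw [hh]; positivity
  have hπ : 0 < Real.pi := Real.pi_pos
  have key : 2 * d / (α * h) = (μ / α) *
      ((2 * d * n / μ) / Real.arsinh (2 * d * n / μ)) := by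
    rw [hh]
    field_simp
  set q := (μ / α) * ((2 * d * n / μ) / Real.arsinh (2 * d * n / μ)) with hq
  have hq0 : 0 < q := by positivity
  have hMge : (M : ℝ) * h ≥ Real.arsinh q := by
    have h1 : (1 / h) * Real.arsinh q ≤ (M : ℝ) := by
      rw [hM]; exact Nat.le_ceil _
    calc Real.arsinh q = ((1 / h) * Real.arsinh q) * h := by field_simp
      _ ≤ (M : ℝ) * h := by
        exact mul_le_mul_of_nonneg_right h1 hh0.le
  refine ⟨by rw [key]; exact hMge, ?_, ?_⟩
  · apply Real.arsinh_le_arsinh.mpr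
    rw [div_le_div_iff₀ (by positivity) (by positivity)]
    calc 2 * (α * h) ≤ 2 * (α * (Real.pi * d)) := by nlinarith
      _ = 2 * d * (Real.pi * α) := by ring
  · have : Real.sinh (Real.arsinh q) ≤ Real.sinh ((M : ℝ) * h) :=
      Real.sinh_le_sinh.mpr hMge
    rw [Real.sinh_arsinh] at this
    have h2 : α * q ≤ α * Real.sinh ((M : ℝ) * h) :=
      mul_le_mul_of_nonneg_left this hα0.le
    have h3 : α * q = μ * ((2 * d * n / μ) / Real.arsinh (2 * d * n / μ)) := by
      rw [hq]; field_simp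
    linarith
end
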